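/- If q is a homogeneous polynomial vector field of degree k on ℝ^d with div sym(q x^T) = 0, then q = 0. In the proof one uses the identity 2 div sym(q x^T) = (k+d+1)q + (div q)x. -/

import Mathlib

open MvPolynomial Finset

lemma deg_eq (d : ℕ) (m : Fin d →₀ ℕ) : m.degree = ∑ i : Fin d, m i := by
  rw [Finsupp.degree]
  exact Finset.sum_subset (Finset.subset_univ _) (by
    intro x _ hx
    simpa using Finsupp.notMem_support_iff.mp hx)

lemma euler_aux (d n : ℕ) (p : MvPolynomial (Fin d) ℝ) (hp : p.IsHomogeneous n) :
    ∑ j : Fin d, X j * pderiv j p = n • p := by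
  have key : ∀ m ∈ p.support, ∑ j : Fin d, X j * pderiv j (monomial m (coeff m p))
      = n • monomial m (coeff m p) := by
    intro m hm
    have hdeg : ∑ i : Fin d, m i = n := by
      rw [← deg_eq]
      simpa [Finsupp.degree_eq_weight_one, Pi.one_def] using hp (mem_support_iff.mp hm)
    have step : ∀ j : Fin d, X j * pderiv j (monomial m (coeff m p))
        = monomial m (((m j : ℝ)) * coeff m p) := by
      intro j
      rcases Nat.eq_zero_or_pos (m j) with h0 | h0
      · simp [pderiv_monomial, h0]
      · have hm' : Finsupp.single j 1 + (m - Finsupp.single j 1) = m := by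
          ext a
          rcases eq_or_ne a j with rfl | ha
          · simp [Finsupp.single_apply]
            omega
          · simp [Finsupp.single_apply, Ne.symm ha]
        rw [pderiv_monomial, X, monomial_mul, one_mul, hm', mul_comm]
    simp_rw [step, ← map_sum, ← Finset.sum_mul, ← Nat.cast_sum, hdeg]
    rw [← Nat.cast_smul_eq_nsmul ℝ, smul_monomial, smul_eq_mul]
  calc ∑ j : Fin d, X j * pderiv j p
      = ∑ m ∈ p.support, ∑ j : Fin d, X j * pderiv j (monomial m (coeff m p)) := by
        rw [Finset.sum_comm]
        refine Finset.sum_congr rfl fun j _ => ?_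
        rw [← Finset.mul_sum, ← map_sum, ← as_sum]
    _ = ∑ m ∈ p.support, n • monomial m (coeff m p) := Finset.sum_congr rfl key
    _ = n • p := by rw [← Finset.smul_sum, ← as_sum]

lemma pderiv_homog (d n : ℕ) (p : MvPolynomial (Fin d) ℝ) (hp : p.IsHomogeneous n)
    (j : Fin d) : (pderiv j p).IsHomogeneous (n - 1) := by
  rw [as_sum p, map_sum]
  apply IsHomogeneous.sum
  intro m hm
  rw [pderiv_monomial]
  rcases Nat.eq_zero_or_pos (m j) with h0 | h0
  · simp only [h0, Nat.cast_zero, mul_zero, map_zero]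
    exact isHomogeneous_zero _ _ _
  · have hdeg : ∑ i : Fin d, m i = n := by
      rw [← deg_eq]
      simpa [Finsupp.degree_eq_weight_one, Pi.one_def] using hp (mem_support_iff.mp hm)
    apply isHomogeneous_monomial
    rw [deg_eq]
    simp_rw [Finsupp.tsub_apply]
    have hle : ∀ i ∈ Finset.univ, Finsupp.single j 1 i ≤ m i := by
      intro i _
      rcases eq_or_ne i j with rfl | hij
      · simpa [Finsupp.single_apply, Nat.one_le_iff_ne_zero, Nat.pos_iff_ne_zero] using h0
      · simp [Finsupp.single_apply, Ne.symm hij]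
    rw [Finset.sum_tsub_distrib Finset.univ hle, hdeg]
    simp [Finsupp.single_apply]

lemma nsmul_cancel {d : ℕ} {n : ℕ} (hn : n ≠ 0) {x : MvPolynomial (Fin d) ℝ}
    (h : n • x = 0) : x = 0 := by
  rw [← Nat.cast_smul_eq_nsmul ℝ] at h
  have hc : (n : ℝ) ≠ 0 := Nat.cast_ne_zero.mpr hn
  calc x = (n : ℝ)⁻¹ • ((n : ℝ) • x) := by rw [smul_smul, inv_mul_cancel₀ hc, one_smul]
    _ = 0 := by rw [h, smul_zero]


/-- The symmetric part of the tensor product `q(x) xᵀ`, as a matrix-valued polynomial field. -/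
noncomputable def symQX (d : ℕ) (q : Fin d → MvPolynomial (Fin d) ℝ) :
    Fin d → Fin d → MvPolynomial (Fin d) ℝ :=
  fun i j => C (2⁻¹ : ℝ) * (q i * X j + X i * q j)

/-- The row-wise divergence of a matrix-valued polynomial field. -/
noncomputable def matDiv (d : ℕ) (τ : Fin d → Fin d → MvPolynomial (Fin d) ℝ) :
    Fin d → MvPolynomial (Fin d) ℝ :=
  fun i => ∑ j : Fin d, pderiv j (τ i j)

/-- If `q` is a homogeneous polynomial vector field of degree `k` with
`div sym(q xᵀ) = 0`, then `q = 0`. -/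
theorem stmt_9 (d k : ℕ) (hd : 1 ≤ d) (q : Fin d → MvPolynomial (Fin d) ℝ)
    (hq : ∀ i, (q i).IsHomogeneous k)
    (h : matDiv d (symQX d q) = 0) : q = 0 := by
  set D : MvPolynomial (Fin d) ℝ := ∑ j : Fin d, pderiv j (q j) with hD
  have key : ∀ i, (k + d + 1) • q i + X i * D = 0 := by
    intro i
    have hi : ∑ j : Fin d, pderiv j (symQX d q i j) = 0 := congrFun h i
    have expand : ∀ j : Fin d, pderiv j (symQX d q i j)
        = C (2⁻¹ : ℝ) * ((X j * pderiv j (q i) + q i * 1)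
            + (pderiv j (X i) * q j + X i * pderiv j (q j))) := by
      intro j
      simp only [symQX, map_add, pderiv_mul, pderiv_X_self, pderiv_C, zero_mul, zero_add]
      ring
    rw [Finset.sum_congr rfl (fun j _ => expand j), ← Finset.mul_sum] at hi
    have hC : (C (2⁻¹ : ℝ) : MvPolynomial (Fin d) ℝ) ≠ 0 := by
      simp [MvPolynomial.C_eq_zero]
    have hsum : ∑ j : Fin d, ((X j * pderiv j (q i) + q i * 1)
        + (pderiv j (X i) * q j + X i * pderiv j (q j))) = 0 :=
      (mul_eq_zero.mp hi).resolve_left hC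
    have e1 : ∑ j : Fin d, X j * pderiv j (q i) = k • q i := euler_aux d k (q i) (hq i)
    have e2 : ∑ j : Fin d, q i * 1 = d • q i := by simp [Finset.sum_const]
    have e3 : ∑ j : Fin d, pderiv j (X i) * q j = q i := by
      rw [Finset.sum_eq_single i]
      · simp
      · intro j _ hj
        rw [pderiv_X_of_ne (Ne.symm hj), zero_mul]
      · simp
    have e4 : ∑ j : Fin d, X i * pderiv j (q j) = X i * D := by
      rw [hD, Finset.mul_sum]
    rw [Finset.sum_add_distrib, Finset.sum_add_distrib, Finset.sum_add_distrib,
      e1, e2, e3, e4] at hsum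
    calc (k + d + 1) • q i + X i * D
        = (k • q i + d • q i) + (q i + X i * D) := by
          rw [add_smul, add_smul, one_smul]; ring
      _ = 0 := hsum
  have hDhom : D.IsHomogeneous (k - 1) :=
    IsHomogeneous.sum _ _ _ (fun j _ => pderiv_homog d k (q j) (hq j) j)
  have hD0 : D = 0 := by
    have h2 : ∑ i : Fin d, pderiv i ((k + d + 1) • q i + X i * D) = 0 := by
      simp only [key, map_zero, Finset.sum_const_zero]
    have expand2 : ∀ i : Fin d, pderiv i ((k + d + 1) • q i + X i * D)
        = (k + d + 1) • pderiv i (q i) + (1 * D + X i * pderiv i D) := by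
      intro i
      rw [map_add, map_nsmul, pderiv_mul, pderiv_X_self]
    rw [Finset.sum_congr rfl (fun i _ => expand2 i), Finset.sum_add_distrib,
      Finset.sum_add_distrib, ← Finset.smul_sum, ← hD] at h2
    have e5 : ∑ i : Fin d, (1 : MvPolynomial (Fin d) ℝ) * D = d • D := by
      simp [Finset.sum_const]
    have e6 : ∑ i : Fin d, X i * pderiv i D = (k - 1) • D := euler_aux d (k - 1) D hDhom
    rw [e5, e6] at h2
    have h3 : ((k + d + 1) + d + (k - 1)) • D = 0 := by
      rw [add_smul, add_smul]; linear_combination (norm := module) h2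
    exact nsmul_cancel (by omega) h3
  funext i
  have := key i
  rw [hD0, mul_zero, add_zero] at this
  simpa using nsmul_cancel (by omega) this
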